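/- Every compact isodiametric set E in the Heisenberg group (i.e. E ∈ I) satisfies: for every p ∈ ∂E there exists q ∈ ∂E with d(p,q) = diam E. -/

import Mathlib

open scoped Real ENNReal
open MeasureTheory

noncomputable section

/-- The Heisenberg group `ℍⁿ`, identified with `ℂⁿ × ℝ` (with the Euclidean `ℓ²` norm on
the `ℂⁿ` factor). -/
abbrev Heis (n : ℕ) : Type := EuclideanSpace ℂ (Fin n) × ℝ

/-- Borel σ-algebra on `ℂⁿ`. -/
instance (n : ℕ) : MeasurableSpace (EuclideanSpace ℂ (Fin n)) := borel _

instance (n : ℕ) : BorelSpace (EuclideanSpace ℂ (Fin n)) := ⟨rfl⟩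

/-- Lebesgue measure on `ℂⁿ`. -/
instance (n : ℕ) : MeasureSpace (EuclideanSpace ℂ (Fin n)) :=
  ⟨Measure.map ((WithLp.equiv 2 (Fin n → ℂ)).symm) volume⟩

namespace Heis

/-- The Hermitian product `z ⬝ conj w = ∑ zⱼ conj(wⱼ)`. -/
def herm {n : ℕ} (z w : EuclideanSpace ℂ (Fin n)) : ℂ :=
  ∑ j, z j * (starRingEnd ℂ) (w j)

/-- The Heisenberg group law `[z,t]·[z',t'] = [z+z', t+t'+2 Im (z ⬝ conj z')]`. -/
def mul {n : ℕ} (p q : Heis n) : Heis n :=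
  (p.1 + q.1, p.2 + q.2 + 2 * (herm p.1 q.1).im)

/-- Dilations `δ_λ [z,t] = [λ z, λ² t]`. -/
def dilation {n : ℕ} (l : ℝ) (p : Heis n) : Heis n := (l • p.1, l ^ 2 * p.2)

/-- A `C¹` horizontal curve in the Heisenberg group: at every point the tangent vector lies
in the horizontal subbundle spanned by the left-invariant fields
`X_j = ∂_{x_j} + 2 y_j ∂_t`, `Y_j = ∂_{y_j} - 2 x_j ∂_t`, which amounts to
`t'(s) = 2 Im (z(s) ⬝ conj z'(s))`. -/
structure HorizCurve (n : ℕ) where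
  z : ℝ → EuclideanSpace ℂ (Fin n)
  t : ℝ → ℝ
  z' : ℝ → EuclideanSpace ℂ (Fin n)
  hz : ∀ s : ℝ, HasDerivAt z (z' s) s
  ht : ∀ s : ℝ, HasDerivAt t (2 * (herm (z s) (z' s)).im) s
  hz' : Continuous z'

/-- The sub-Riemannian length of a horizontal curve (the metric `g` makes the horizontal
frame orthonormal, so the length is the integral of the Euclidean norm of `z'`). -/
def HorizCurve.length {n : ℕ} (γ : HorizCurve n) : ℝ :=
  ∫ s in (0:ℝ)..1, ‖γ.z' s‖

/-- The Carnot–Carathéodory distance: the infimum of lengths of horizontal curves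
joining `p` to `q`. -/
def ccDist {n : ℕ} (p q : Heis n) : ℝ :=
  sInf { L : ℝ | ∃ γ : HorizCurve n, γ.z 0 = p.1 ∧ γ.t 0 = p.2 ∧
      γ.z 1 = q.1 ∧ γ.t 1 = q.2 ∧ L = γ.length }

/-- Open CC-ball. -/
def ccBall {n : ℕ} (p : Heis n) (r : ℝ) : Set (Heis n) := { q | ccDist p q < r }

/-- Closed CC-ball. -/
def ccClosedBall {n : ℕ} (p : Heis n) (r : ℝ) : Set (Heis n) := { q | ccDist p q ≤ r }

/-- CC-diameter of a set. -/
def ccDiam {n : ℕ} (F : Set (Heis n)) : ℝ :=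
  sSup { r : ℝ | ∃ p ∈ F, ∃ q ∈ F, r = ccDist p q }

/-- A set is CC-bounded if the pairwise CC-distances of its points are bounded. -/
def ccBounded {n : ℕ} (F : Set (Heis n)) : Prop :=
  ∃ M : ℝ, ∀ p ∈ F, ∀ q ∈ F, ccDist p q ≤ M

/-- The vertical segment joining two points with the same `ℂⁿ`-component. -/
def vseg {n : ℕ} (p q : Heis n) : Set (Heis n) :=
  { x | x.1 = p.1 ∧ x.2 ∈ Set.uIcc p.2 q.2 }

/-- The `t`-convex hull of a set. -/
def tco {n : ℕ} (F : Set (Heis n)) : Set (Heis n) :=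
  { x | ∃ p₁ ∈ F, ∃ p₂ ∈ F, p₁.1 = p₂.1 ∧ x ∈ vseg p₁ p₂ }

/-- A set is `t`-convex if it contains the vertical segment joining any two of its points
having the same `ℂⁿ`-component. -/
def TConvex {n : ℕ} (E : Set (Heis n)) : Prop :=
  ∀ p ∈ E, ∀ q ∈ E, p.1 = q.1 → vseg p q ⊆ E

/-- The rotation `r_θ [z,t] = [(e^{iθ₁} z₁, …, e^{iθₙ} zₙ), t]`. -/
def rot {n : ℕ} (θ : Fin n → ℝ) (p : Heis n) : Heis n :=
  ((WithLp.equiv 2 (Fin n → ℂ)).symm fun j => Complex.exp ((θ j : ℂ) * Complex.I) * p.1 j,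
    p.2)

/-- Rotationally invariant sets: the class `𝓡`. -/
def RotInvariant {n : ℕ} (F : Set (Heis n)) : Prop :=
  ∀ θ : Fin n → ℝ, rot θ '' F ⊆ F

/-- The reflection `σ [z,t] = [conj z, t]`. -/
def sigmaRefl {n : ℕ} (p : Heis n) : Heis n :=
  ((WithLp.equiv 2 (Fin n → ℂ)).symm fun j => (starRingEnd ℂ) (p.1 j), p.2)

/-- The Steiner symmetrization of a set with respect to the `ℂⁿ`-plane. -/
def steiner {n : ℕ} (F : Set (Heis n)) : Set (Heis n) :=
  { x | x.1 ∈ Prod.fst '' F ∧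
      2 * |x.2| ≤ (volume { s : ℝ | ((x.1, s) : Heis n) ∈ F }).toReal }

/-- The isodiametric constant `C_I`. -/
def CI (n : ℕ) : ℝ :=
  sSup { x : ℝ | ∃ F : Set (Heis n), ccBounded F ∧ 0 < ccDiam F ∧
    x = (volume F).toReal / (ccDiam F) ^ (2 * n + 2) }

/-- The isodiametric constant `C_{I,𝓡}` for the restricted problem in the class `𝓡`. -/
def CIR (n : ℕ) : ℝ :=
  sSup { x : ℝ | ∃ F : Set (Heis n), RotInvariant F ∧ ccBounded F ∧ 0 < ccDiam F ∧
    x = (volume F).toReal / (ccDiam F) ^ (2 * n + 2) }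


set_option linter.dupNamespace false

lemma herm_eq_inner {n : ℕ} (z w : EuclideanSpace ℂ (Fin n)) :
    herm z w = (inner ℂ w z : ℂ) := by
  simp [herm, PiLp.inner_apply, RCLike.inner_apply, mul_comm]
lemma abs_herm_le {n : ℕ} (z w : EuclideanSpace ℂ (Fin n)) :
    ‖herm z w‖ ≤ ‖z‖ * ‖w‖ := by
  rw [herm_eq_inner]
  simpa [mul_comm] using norm_inner_le_norm (𝕜 := ℂ) w z
lemma abs_im_herm_le {n : ℕ} (z w : EuclideanSpace ℂ (Fin n)) :
    |(herm z w).im| ≤ ‖z‖ * ‖w‖ :=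
  le_trans (Complex.abs_im_le_norm _) (abs_herm_le z w)
lemma herm_sub_left {n : ℕ} (z z' w : EuclideanSpace ℂ (Fin n)) :
    herm (z - z') w = herm z w - herm z' w := by
  simp [herm_eq_inner, inner_sub_right]
lemma continuous_herm {n : ℕ} : Continuous (fun p : EuclideanSpace ℂ (Fin n) × EuclideanSpace ℂ (Fin n) => herm p.1 p.2) := by
  simp only [herm_eq_inner]
  exact continuous_inner.comp (continuous_snd.prodMk continuous_fst)

namespace HorizCurve
variable {n : ℕ} (γ : HorizCurve n)

lemma cont_z : Continuous γ.z :=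
  continuous_iff_continuousAt.2 fun s => (γ.hz s).continuousAt

lemma cont_t : Continuous γ.t :=
  continuous_iff_continuousAt.2 fun s => (γ.ht s).continuousAt

lemma cont_integrand : Continuous fun s => 2 * (herm (γ.z s) (γ.z' s)).im :=
  (continuous_const.mul (Complex.continuous_im.comp
    (continuous_herm.comp (γ.cont_z.prodMk γ.hz')))) 

lemma length_nonneg : 0 ≤ γ.length :=
  intervalIntegral.integral_nonneg (by norm_num) fun s _ => norm_nonneg _

lemma z_sub_eq (a b : ℝ) : γ.z b - γ.z a = ∫ s in a..b, γ.z' s :=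
  (intervalIntegral.integral_eq_sub_of_hasDerivAt (fun s _ => γ.hz s)
    (γ.hz'.intervalIntegrable _ _)).symm

lemma t_sub_eq (a b : ℝ) : γ.t b - γ.t a = ∫ s in a..b, 2 * (herm (γ.z s) (γ.z' s)).im :=
  (intervalIntegral.integral_eq_sub_of_hasDerivAt (fun s _ => γ.ht s)
    (γ.cont_integrand.intervalIntegrable _ _)).symm

lemma partial_le_length {s : ℝ} (h0 : 0 ≤ s) (h1 : s ≤ 1) :
    ∫ u in (0:ℝ)..s, ‖γ.z' u‖ ≤ γ.length := by
  apply intervalIntegral.integral_mono_interval (le_refl (0:ℝ)) h0 h1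
  · filter_upwards with x using norm_nonneg _
  · exact (γ.hz'.norm).intervalIntegrable _ _

lemma norm_z_sub_le {s : ℝ} (h0 : 0 ≤ s) (h1 : s ≤ 1) :
    ‖γ.z s - γ.z 0‖ ≤ γ.length := by
  rw [γ.z_sub_eq 0 s]
  exact le_trans (intervalIntegral.norm_integral_le_integral_norm h0)
    (γ.partial_le_length h0 h1)

lemma norm_z_one_sub_le : ‖γ.z 1 - γ.z 0‖ ≤ γ.length :=
  γ.norm_z_sub_le zero_le_one le_rfl

lemma herm_im_eq (z w : EuclideanSpace ℂ (Fin n)) :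
    (herm z w).im = -((inner ℂ z w : ℂ)).im := by
  simp only [herm, PiLp.inner_apply, RCLike.inner_apply, Complex.im_sum, ← Finset.sum_neg_distrib]
  exact Finset.sum_congr rfl fun j _ => by simp [Complex.mul_im]; ring

lemma t_est : |γ.t 1 - γ.t 0 - 2 * (herm (γ.z 0) (γ.z 1 - γ.z 0)).im|
    ≤ 2 * γ.length ^ 2 := by
  set L := γ.length with hL
  set T : EuclideanSpace ℂ (Fin n) →L[ℝ] ℝ :=
    (-2 : ℝ) • (Complex.imCLM.comp ((innerSL ℂ (γ.z 0)).restrictScalars ℝ)) with hT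
  have hTw : ∀ w, T w = 2 * (herm (γ.z 0) w).im := by
    intro w
    simp only [hT, ContinuousLinearMap.smul_apply, ContinuousLinearMap.coe_smul',
      Pi.smul_apply, ContinuousLinearMap.coe_comp', Function.comp_apply,
      ContinuousLinearMap.coe_restrictScalars', innerSL_apply_apply,
      Complex.imCLM_apply, herm_im_eq, smul_eq_mul]
    ring
  have h2 : 2 * (herm (γ.z 0) (γ.z 1 - γ.z 0)).im
      = ∫ s in (0:ℝ)..1, 2 * (herm (γ.z 0) (γ.z' s)).im := by
    rw [← hTw, γ.z_sub_eq 0 1, ← T.intervalIntegral_comp_comm (γ.hz'.intervalIntegrable _ _)]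
    simp [hTw]
  have hc2 : Continuous fun s => 2 * (herm (γ.z 0) (γ.z' s)).im :=
    continuous_const.mul (Complex.continuous_im.comp
      (continuous_herm.comp (continuous_const.prodMk γ.hz')))
  have h3 : γ.t 1 - γ.t 0 - 2 * (herm (γ.z 0) (γ.z 1 - γ.z 0)).im
      = ∫ s in (0:ℝ)..1, 2 * (herm (γ.z s - γ.z 0) (γ.z' s)).im := by
    rw [γ.t_sub_eq 0 1, h2, ← intervalIntegral.integral_sub
      (γ.cont_integrand.intervalIntegrable _ _) (hc2.intervalIntegrable _ _)]
    congr 1; funext s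
    rw [herm_sub_left, Complex.sub_im]; ring
  rw [h3]
  have hcont : Continuous fun s => 2 * (herm (γ.z s - γ.z 0) (γ.z' s)).im :=
    continuous_const.mul (Complex.continuous_im.comp
      (continuous_herm.comp ((γ.cont_z.sub continuous_const).prodMk γ.hz')))
  calc |∫ s in (0:ℝ)..1, 2 * (herm (γ.z s - γ.z 0) (γ.z' s)).im|
      ≤ ∫ s in (0:ℝ)..1, |2 * (herm (γ.z s - γ.z 0) (γ.z' s)).im| :=
        intervalIntegral.abs_integral_le_integral_abs zero_le_one
    _ ≤ ∫ s in (0:ℝ)..1, 2 * L * ‖γ.z' s‖ := by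
        apply intervalIntegral.integral_mono_on zero_le_one
          ((hcont.abs).intervalIntegrable _ _)
          ((continuous_const.mul γ.hz'.norm).intervalIntegrable _ _)
        intro s hs
        rw [abs_mul, abs_two]
        calc 2 * |(herm (γ.z s - γ.z 0) (γ.z' s)).im|
            ≤ 2 * (‖γ.z s - γ.z 0‖ * ‖γ.z' s‖) := by
              have := abs_im_herm_le (γ.z s - γ.z 0) (γ.z' s)
              nlinarith [this]
          _ ≤ 2 * L * ‖γ.z' s‖ := by
              have h1 := γ.norm_z_sub_le hs.1 hs.2
              nlinarith [norm_nonneg (γ.z' s), norm_nonneg (γ.z s - γ.z 0)]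
    _ = 2 * L ^ 2 := by
        rw [intervalIntegral.integral_const_mul]
        have : (∫ x in (0:ℝ)..1, ‖γ.z' x‖) = L := rfl
        rw [this]; ring

end HorizCurve

end Heis
namespace Heis
variable {n : ℕ}

lemma herm_add_left (z z' w : EuclideanSpace ℂ (Fin n)) :
    herm (z + z') w = herm z w + herm z' w := by
  simp [herm_eq_inner, inner_add_right]

lemma herm_zero_right (z : EuclideanSpace ℂ (Fin n)) : herm z 0 = 0 := by
  simp [herm]

lemma im_herm_self (z : EuclideanSpace ℂ (Fin n)) : (herm z z).im = 0 := by
  have : ∀ j, (z j * (starRingEnd ℂ) (z j)).im = 0 := by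
    intro j; rw [Complex.mul_conj]; simp
  simp [herm, Complex.im_sum, this]

lemma herm_smul_left (a : ℝ) (z w : EuclideanSpace ℂ (Fin n)) :
    herm (a • z) w = a * herm z w := by
  simp only [herm, PiLp.smul_apply, Finset.mul_sum]
  refine Finset.sum_congr rfl fun j _ => ?_
  simp [Complex.real_smul]; ring

lemma herm_smul_right (a : ℝ) (z w : EuclideanSpace ℂ (Fin n)) :
    herm z (a • w) = a * herm z w := by
  simp only [herm, PiLp.smul_apply, Finset.mul_sum]
  refine Finset.sum_congr rfl fun j _ => ?_
  simp [Complex.real_smul]; ring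

lemma herm_single (hn : 0 < n) (a b : ℂ) :
    herm (a • EuclideanSpace.single (⟨0, hn⟩ : Fin n) (1:ℂ))
      (b • EuclideanSpace.single (⟨0, hn⟩ : Fin n) (1:ℂ)) = a * (starRingEnd ℂ) b := by
  simp only [herm, PiLp.smul_apply, EuclideanSpace.single_apply, smul_eq_mul]
  rw [Finset.sum_eq_single (⟨0, hn⟩ : Fin n)] <;> simp +contextual

/-- `w ↦ 2 Im (herm z₀ w)` as a continuous linear map. -/
def hermCLM (z0 : EuclideanSpace ℂ (Fin n)) : EuclideanSpace ℂ (Fin n) →L[ℝ] ℝ :=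
  (-2 : ℝ) • (Complex.imCLM.comp ((innerSL ℂ z0).restrictScalars ℝ))

lemma hermCLM_apply (z0 w : EuclideanSpace ℂ (Fin n)) :
    hermCLM z0 w = 2 * (herm z0 w).im := by
  simp only [hermCLM, ContinuousLinearMap.smul_apply, ContinuousLinearMap.coe_smul',
    Pi.smul_apply, ContinuousLinearMap.coe_comp', Function.comp_apply,
    ContinuousLinearMap.coe_restrictScalars', innerSL_apply_apply,
    Complex.imCLM_apply, HorizCurve.herm_im_eq, smul_eq_mul]
  ring

/-- The straight horizontal segment from `p`. -/
def lineCurve (p q : Heis n) : HorizCurve n where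
  z s := p.1 + s • (q.1 - p.1)
  t s := p.2 + s * (2 * (herm p.1 (q.1 - p.1)).im)
  z' _ := q.1 - p.1
  hz s := by simpa using ((hasDerivAt_id s).smul_const (q.1 - p.1)).const_add p.1
  ht s := by
    have h : HasDerivAt (fun s : ℝ => p.2 + s * (2 * (herm p.1 (q.1 - p.1)).im))
        (2 * (herm p.1 (q.1 - p.1)).im) s := by
      simpa using ((hasDerivAt_id s).mul_const (2 * (herm p.1 (q.1 - p.1)).im)).const_add p.2
    convert h using 1
    rw [herm_add_left, herm_smul_left, Complex.add_im, Complex.mul_im]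
    simp [im_herm_self (q.1 - p.1)]
  hz' := continuous_const

@[simp] lemma lineCurve_z0 (p q : Heis n) : (lineCurve p q).z 0 = p.1 := by
  simp [lineCurve]
@[simp] lemma lineCurve_z1 (p q : Heis n) : (lineCurve p q).z 1 = q.1 := by
  simp [lineCurve]
@[simp] lemma lineCurve_t0 (p q : Heis n) : (lineCurve p q).t 0 = p.2 := by
  simp [lineCurve]
@[simp] lemma lineCurve_t1 (p q : Heis n) :
    (lineCurve p q).t 1 = p.2 + 2 * (herm p.1 (q.1 - p.1)).im := by
  simp [lineCurve]
lemma lineCurve_length (p q : Heis n) : (lineCurve p q).length = ‖q.1 - p.1‖ := by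
  simp [HorizCurve.length, lineCurve]

section Loop

def loopOmega (T : ℝ) : ℝ := if 0 ≤ T then -(2*π) else 2*π
def loopR (T : ℝ) : ℝ := Real.sqrt (|T| / (4*π))
def loopC (T s : ℝ) : ℂ :=
  ↑(loopR T) * (Complex.exp (↑(loopOmega T * s) * Complex.I) - 1)
def loopC' (T s : ℝ) : ℂ :=
  ↑(loopR T) * (↑(loopOmega T) * Complex.I * Complex.exp (↑(loopOmega T * s) * Complex.I))
def loopH (T s : ℝ) : ℝ :=
  (loopR T)^2 * (2 * Real.sin (loopOmega T * s) - 2 * (loopOmega T * s))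

lemma loopR_nonneg (T : ℝ) : 0 ≤ loopR T := Real.sqrt_nonneg _

lemma loopR_sq (T : ℝ) : (loopR T)^2 = |T| / (4*π) :=
  Real.sq_sqrt (by positivity)

lemma abs_loopOmega (T : ℝ) : |loopOmega T| = 2*π := by
  unfold loopOmega
  split
  · rw [abs_neg, abs_of_nonneg (by positivity)]
  · rw [abs_of_nonneg (by positivity)]

lemma loopC_hasDeriv (T s : ℝ) : HasDerivAt (loopC T) (loopC' T s) s := by
  have h1 : HasDerivAt (fun s : ℝ => (↑(loopOmega T * s) : ℂ) * Complex.I)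
      (↑(loopOmega T) * Complex.I) s := by
    simpa using (((hasDerivAt_id s).const_mul (loopOmega T)).ofReal_comp).mul_const Complex.I
  have h2 := h1.cexp
  have h3 := ((h2.sub_const 1).const_mul (↑(loopR T) : ℂ))
  convert h3 using 1 <;> try rfl
  unfold loopC'
  ring

lemma loopH_hasDeriv (T s : ℝ) : HasDerivAt (loopH T)
    ((loopR T)^2 * (2 * (Real.cos (loopOmega T * s) * loopOmega T) - 2 * loopOmega T)) s := by
  have h1 : HasDerivAt (fun s : ℝ => loopOmega T * s) (loopOmega T) s := by
    simpa using (hasDerivAt_id s).const_mul (loopOmega T)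
  have h2 : HasDerivAt (fun s : ℝ => Real.sin (loopOmega T * s))
      (Real.cos (loopOmega T * s) * loopOmega T) s := (Real.hasDerivAt_sin _).comp s h1
  exact (((h2.const_mul 2).sub (h1.const_mul 2)).const_mul _)

lemma loop_exp_mul_conj (θ : ℝ) :
    Complex.exp (↑θ * Complex.I) * (starRingEnd ℂ) (Complex.exp (↑θ * Complex.I)) = 1 := by
  rw [Complex.mul_conj, Complex.normSq_eq_norm_sq, Complex.norm_exp_ofReal_mul_I]
  norm_num

lemma loop_im_ab (T s : ℝ) :
    (loopC T s * (starRingEnd ℂ) (loopC' T s)).im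
      = (loopR T)^2 * loopOmega T * (Real.cos (loopOmega T * s) - 1) := by
  set θ := loopOmega T * s with hθ
  set u := Complex.exp (↑θ * Complex.I) with hu
  have huu : u * (starRingEnd ℂ) u = 1 := loop_exp_mul_conj θ
  have hconj : (starRingEnd ℂ) (loopC' T s)
      = ↑(loopR T) * (↑(loopOmega T) * (-Complex.I) * (starRingEnd ℂ) u) := by
    unfold loopC'
    rw [← hθ, ← hu]
    simp [map_mul, Complex.conj_ofReal]
  have key : loopC T s * (starRingEnd ℂ) (loopC' T s)
      = ↑((loopR T)^2 * loopOmega T) * (((starRingEnd ℂ) u - 1) * Complex.I) := by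
    rw [hconj]
    unfold loopC
    rw [← hθ, ← hu]
    push_cast
    linear_combination (-(↑(loopR T):ℂ)^2 * (loopOmega T) * Complex.I) * huu
  rw [key]
  simp only [Complex.mul_im, Complex.ofReal_re, Complex.ofReal_im, Complex.mul_I_im,
    Complex.mul_I_re, Complex.sub_re, Complex.sub_im, Complex.conj_re, Complex.conj_im,
    Complex.one_re, Complex.one_im, Complex.I_re, Complex.I_im, hu, Complex.exp_ofReal_mul_I_re]
  ring

variable (hn : 0 < n) (w : EuclideanSpace ℂ (Fin n)) (t0 T : ℝ)

/-- A horizontal loop changing only the `t`-coordinate by `T`. -/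
def loopCurve : HorizCurve n where
  z s := w + (loopC T s) • EuclideanSpace.single (⟨0, hn⟩ : Fin n) (1:ℂ)
  t s := t0 + hermCLM w ((loopC T s) • EuclideanSpace.single (⟨0, hn⟩ : Fin n) (1:ℂ))
    + loopH T s
  z' s := (loopC' T s) • EuclideanSpace.single (⟨0, hn⟩ : Fin n) (1:ℂ)
  hz s := by
    simpa using (((loopC_hasDeriv T s).smul_const
      (EuclideanSpace.single (⟨0, hn⟩ : Fin n) (1:ℂ))).const_add w)
  ht s := by
    have hζ : HasDerivAt (fun s => (loopC T s) • EuclideanSpace.single (⟨0, hn⟩ : Fin n) (1:ℂ))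
        ((loopC' T s) • EuclideanSpace.single (⟨0, hn⟩ : Fin n) (1:ℂ)) s :=
      (loopC_hasDeriv T s).smul_const _
    have h1 : HasDerivAt (fun s => t0 + hermCLM w ((loopC T s) •
        EuclideanSpace.single (⟨0, hn⟩ : Fin n) (1:ℂ)))
        (hermCLM w ((loopC' T s) • EuclideanSpace.single (⟨0, hn⟩ : Fin n) (1:ℂ))) s :=
      ((hermCLM w).hasFDerivAt.comp_hasDerivAt s hζ).const_add t0
    have h2 := h1.add (loopH_hasDeriv T s)
    convert h2 using 1 <;> try rfl
    rw [herm_add_left, hermCLM_apply, herm_single hn, Complex.add_im]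
    rw [loop_im_ab]
    ring
  hz' := by
    have : Continuous (loopC' T) := by
      apply Continuous.mul continuous_const
      apply Continuous.mul continuous_const
      apply Complex.continuous_exp.comp
      exact (Complex.continuous_ofReal.comp (continuous_const.mul continuous_id)).mul
        continuous_const
    exact this.smul continuous_const

@[simp] lemma loopC_zero : loopC T 0 = 0 := by
  simp [loopC]

lemma loop_exp_omega : Complex.exp (↑(loopOmega T) * Complex.I) = 1 := by
  unfold loopOmega
  split
  · have : ((-(2*π):ℝ) : ℂ) * Complex.I = ((-1:ℤ) : ℂ) * (2*↑π*Complex.I) := by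
      push_cast; ring
    rw [this, Complex.exp_int_mul_two_pi_mul_I]
  · have : (((2*π):ℝ) : ℂ) * Complex.I = ((1:ℤ) : ℂ) * (2*↑π*Complex.I) := by
      push_cast; ring
    rw [this, Complex.exp_int_mul_two_pi_mul_I]

@[simp] lemma loopC_one : loopC T 1 = 0 := by
  unfold loopC
  rw [mul_one, loop_exp_omega]
  simp

@[simp] lemma loopCurve_z0 : (loopCurve hn w t0 T).z 0 = w := by
  simp [loopCurve]
@[simp] lemma loopCurve_z1 : (loopCurve hn w t0 T).z 1 = w := by
  simp [loopCurve]
@[simp] lemma loopCurve_t0 : (loopCurve hn w t0 T).t 0 = t0 := by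
  simp [loopCurve, loopH, hermCLM_apply, herm_zero_right]
@[simp] lemma loopCurve_t1 : (loopCurve hn w t0 T).t 1 = t0 + T := by
  have hπ : (π:ℝ) ≠ 0 := Real.pi_ne_zero
  simp only [loopCurve, loopC_one, zero_smul, hermCLM_apply, herm_zero_right,
    Complex.zero_im, mul_zero, add_zero]
  unfold loopH
  rw [loopR_sq]
  unfold loopOmega
  rcases le_or_gt 0 T with h | h
  · rw [if_pos h, mul_one, Real.sin_neg, Real.sin_two_pi, abs_of_nonneg h]
    field_simp
    ring
  · rw [if_neg (not_le.2 h), mul_one, Real.sin_two_pi, abs_of_neg h]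
    field_simp
    ring

lemma loopCurve_length : (loopCurve hn w t0 T).length = Real.sqrt (π * |T|) := by
  have hnorm : ∀ s : ℝ, ‖(loopCurve hn w t0 T).z' s‖ = loopR T * (2*π) := by
    intro s
    show ‖(loopC' T s) • EuclideanSpace.single (⟨0, hn⟩ : Fin n) (1:ℂ)‖ = _
    rw [norm_smul, EuclideanSpace.norm_single]
    unfold loopC'
    simp only [norm_mul, Complex.norm_real, Real.norm_eq_abs, Complex.norm_I,
      Complex.norm_exp_ofReal_mul_I, norm_one]
    rw [abs_of_nonneg (loopR_nonneg T), abs_loopOmega]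
    ring
  rw [HorizCurve.length, intervalIntegral.integral_congr (g := fun _ => loopR T * (2*π))
    (fun s _ => hnorm s)]
  rw [intervalIntegral.integral_const, smul_eq_mul, sub_zero, one_mul]
  rw [show π * |T| = (|T|/(4*π)) * (2*π)^2 by field_simp; ring]
  rw [Real.sqrt_mul (by positivity), Real.sqrt_sq (by positivity)]
  rfl

end Loop

end Heis
section Glue

def phi (u : ℝ) : ℝ := u - Real.sin (2*π*u)/(2*π)
def phid (u : ℝ) : ℝ := 1 - Real.cos (2*π*u)

@[simp] lemma phi_zero : phi 0 = 0 := by simp [phi]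
@[simp] lemma phi_one : phi 1 = 1 := by
  simp [phi, Real.sin_two_pi]
@[simp] lemma phid_zero : phid 0 = 0 := by simp [phid]
@[simp] lemma phid_one : phid 1 = 0 := by simp [phid, Real.cos_two_pi]
lemma phid_nonneg (u : ℝ) : 0 ≤ phid u := by
  simp [phid, Real.cos_le_one]
lemma continuous_phid : Continuous phid :=
  continuous_const.sub (Real.continuous_cos.comp (continuous_const.mul continuous_id))
lemma continuous_phi : Continuous phi :=
  continuous_id.sub ((Real.continuous_sin.comp (continuous_const.mul continuous_id)).div_const _)
lemma phi_hasDeriv (u : ℝ) : HasDerivAt phi (phid u) u := by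
  have h1 : HasDerivAt (fun u : ℝ => 2*π*u) (2*π) u := by
    simpa using (hasDerivAt_id u).const_mul (2*π)
  have h2 : HasDerivAt (fun u : ℝ => Real.sin (2*π*u)) (Real.cos (2*π*u) * (2*π)) u :=
    (Real.hasDerivAt_sin _).comp u h1
  have h3 := (hasDerivAt_id u).sub (h2.div_const (2*π))
  have hπ : (2*π) ≠ 0 := by positivity
  convert h3 using 1 <;> try rfl
  field_simp [phid]
  rfl

lemma phi1_hasDeriv (s : ℝ) : HasDerivAt (fun s : ℝ => phi (2*s)) (2 * phid (2*s)) s := by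
  have h1 : HasDerivAt (fun s : ℝ => 2*s) 2 s := by simpa using (hasDerivAt_id s).const_mul 2
  have h := (phi_hasDeriv (2*s)).comp s h1
  rw [mul_comm] at h
  exact h

lemma phi2_hasDeriv (s : ℝ) : HasDerivAt (fun s : ℝ => phi (2*s - 1)) (2 * phid (2*s - 1)) s := by
  have h1 : HasDerivAt (fun s : ℝ => 2*s - 1) 2 s := by
    simpa using ((hasDerivAt_id s).const_mul 2).sub_const 1
  have h := (phi_hasDeriv (2*s - 1)).comp s h1
  rw [mul_comm] at h
  exact h

variable {X : Type*} [NormedAddCommGroup X] [NormedSpace ℝ X]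

lemma glue_hasDerivAt (f₁ f₂ : ℝ → X) (d₁ d₂ : ℝ → X)
    (h₁ : ∀ u, HasDerivAt f₁ (d₁ u) u) (h₂ : ∀ u, HasDerivAt f₂ (d₂ u) u)
    (hmatch : f₁ 1 = f₂ 0) (s : ℝ) :
    HasDerivAt (fun s => if s ≤ 1/2 then f₁ (phi (2*s)) else f₂ (phi (2*s - 1)))
      (if s ≤ 1/2 then (2 * phid (2*s)) • d₁ (phi (2*s))
        else (2 * phid (2*s-1)) • d₂ (phi (2*s-1))) s := by
  have left : ∀ s : ℝ, HasDerivAt (fun s => f₁ (phi (2*s)))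
      ((2 * phid (2*s)) • d₁ (phi (2*s))) s := fun s =>
    (h₁ (phi (2*s))).scomp s (phi1_hasDeriv s)
  have right : ∀ s : ℝ, HasDerivAt (fun s => f₂ (phi (2*s - 1)))
      ((2 * phid (2*s-1)) • d₂ (phi (2*s-1))) s := fun s =>
    (h₂ (phi (2*s-1))).scomp s (phi2_hasDeriv s)
  rcases lt_trichotomy s (1/2) with h | h | h
  · rw [if_pos h.le]
    refine (left s).congr_of_eventuallyEq ?_
    filter_upwards [Iio_mem_nhds h] with x hx
    rw [if_pos (le_of_lt hx)]
  · subst h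
    rw [if_pos le_rfl]
    have hd1 : (2 * phid (2*(1/2:ℝ))) • d₁ (phi (2*(1/2:ℝ))) = 0 := by
      norm_num
    rw [hd1]
    have hIic : HasDerivWithinAt
        (fun s => if s ≤ 1/2 then f₁ (phi (2*s)) else f₂ (phi (2*s - 1)))
        0 (Set.Iic (1/2:ℝ)) (1/2) := by
      have := ((left (1/2)).hasDerivWithinAt (s := Set.Iic (1/2:ℝ)))
      rw [hd1] at this
      exact this.congr (fun x hx => if_pos hx) (if_pos le_rfl)
    have hIci : HasDerivWithinAt
        (fun s => if s ≤ 1/2 then f₁ (phi (2*s)) else f₂ (phi (2*s - 1)))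
        0 (Set.Ici (1/2:ℝ)) (1/2) := by
      have hd2 : (2 * phid (2*(1/2:ℝ) - 1)) • d₂ (phi (2*(1/2:ℝ) - 1)) = 0 := by
        norm_num
      have := ((right (1/2)).hasDerivWithinAt (s := Set.Ici (1/2:ℝ)))
      rw [hd2] at this
      refine this.congr (fun x hx => ?_) ?_
      · rcases eq_or_lt_of_le (Set.mem_Ici.mp hx) with rfl | hlt
        · rw [if_pos le_rfl]
          norm_num [hmatch]
        · rw [if_neg (not_le.2 hlt)]
      · rw [if_pos le_rfl]
        norm_num [hmatch]
    have := HasFDerivWithinAt.union hIic hIci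
    rw [Set.Iic_union_Ici] at this
    exact hasDerivWithinAt_univ.mp this
  · rw [if_neg (not_le.2 h)]
    refine (right s).congr_of_eventuallyEq ?_
    filter_upwards [Ioi_mem_nhds h] with x hx
    rw [if_neg (not_le.2 hx)]

end Glue

namespace Heis
variable {n : ℕ}

lemma im_herm_smul_right (a : ℝ) (z w : EuclideanSpace ℂ (Fin n)) :
    (herm z (a • w)).im = a * (herm z w).im := by
  rw [herm_smul_right]; simp [Complex.mul_im]

lemma im_herm_smul_left (a : ℝ) (z w : EuclideanSpace ℂ (Fin n)) :
    (herm (a • z) w).im = a * (herm z w).im := by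
  rw [herm_smul_left]; simp [Complex.mul_im]

lemma herm_neg_right (z w : EuclideanSpace ℂ (Fin n)) :
    herm z (-w) = - herm z w := by
  simp [herm_eq_inner, inner_neg_left]

/-- Concatenation of horizontal curves. -/
def concat (γ₁ γ₂ : HorizCurve n) (hmz : γ₁.z 1 = γ₂.z 0) (hmt : γ₁.t 1 = γ₂.t 0) :
    HorizCurve n where
  z s := if s ≤ 1/2 then γ₁.z (phi (2*s)) else γ₂.z (phi (2*s - 1))
  t s := if s ≤ 1/2 then γ₁.t (phi (2*s)) else γ₂.t (phi (2*s - 1))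
  z' s := if s ≤ 1/2 then (2 * phid (2*s)) • γ₁.z' (phi (2*s))
    else (2 * phid (2*s-1)) • γ₂.z' (phi (2*s-1))
  hz s := by
    simpa using glue_hasDerivAt γ₁.z γ₂.z γ₁.z' γ₂.z' γ₁.hz γ₂.hz hmz s
  ht s := by
    have := glue_hasDerivAt γ₁.t γ₂.t _ _ γ₁.ht γ₂.ht hmt s
    convert this using 1 <;> try rfl
    beta_reduce
    split_ifs with hs
    · rw [smul_eq_mul, im_herm_smul_right]; ring
    · rw [smul_eq_mul, im_herm_smul_right]; ring
  hz' := by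
    refine Continuous.if_le ?_ ?_ continuous_id continuous_const ?_
    · exact (continuous_const.mul (continuous_phid.comp (continuous_const.mul continuous_id))).smul
        (γ₁.hz'.comp (continuous_phi.comp (continuous_const.mul continuous_id)))
    · exact (continuous_const.mul (continuous_phid.comp
        ((continuous_const.mul continuous_id).sub continuous_const))).smul
        (γ₂.hz'.comp (continuous_phi.comp ((continuous_const.mul continuous_id).sub continuous_const)))
    · rintro x rfl
      norm_num
end Heis
namespace Heis
variable {n : ℕ}


@[simp] lemma concat_z0 (γ₁ γ₂ : HorizCurve n) (h h') :
    (concat γ₁ γ₂ h h').z 0 = γ₁.z 0 := by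
  show (if (0:ℝ) ≤ 1/2 then _ else _) = _
  rw [if_pos (by norm_num)]
  norm_num
@[simp] lemma concat_z1 (γ₁ γ₂ : HorizCurve n) (h h') :
    (concat γ₁ γ₂ h h').z 1 = γ₂.z 1 := by
  show (if (1:ℝ) ≤ 1/2 then _ else _) = _
  rw [if_neg (by norm_num)]
  norm_num
@[simp] lemma concat_t0 (γ₁ γ₂ : HorizCurve n) (h h') :
    (concat γ₁ γ₂ h h').t 0 = γ₁.t 0 := by
  show (if (0:ℝ) ≤ 1/2 then _ else _) = _
  rw [if_pos (by norm_num)]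
  norm_num
@[simp] lemma concat_t1 (γ₁ γ₂ : HorizCurve n) (h h') :
    (concat γ₁ γ₂ h h').t 1 = γ₂.t 1 := by
  show (if (1:ℝ) ≤ 1/2 then _ else _) = _
  rw [if_neg (by norm_num)]
  norm_num

lemma concat_length (γ₁ γ₂ : HorizCurve n) (h h') :
    (concat γ₁ γ₂ h h').length = γ₁.length + γ₂.length := by
  have hcont := (concat γ₁ γ₂ h h').hz'.norm
  have hsplit := intervalIntegral.integral_add_adjacent_intervals
    (a := (0:ℝ)) (b := 1/2) (c := 1) (f := fun s => ‖(concat γ₁ γ₂ h h').z' s‖) (μ := volume)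
    (hcont.intervalIntegrable _ _) (hcont.intervalIntegrable _ _)
  rw [HorizCurve.length, ← hsplit]
  have e1 : ∫ s in (0:ℝ)..(1/2), ‖(concat γ₁ γ₂ h h').z' s‖ = γ₁.length := by
    have heq : Set.EqOn (fun s => ‖(concat γ₁ γ₂ h h').z' s‖)
        (fun s => (2 * phid (2*s)) • ((fun u => ‖γ₁.z' u‖) ∘ (fun s => phi (2*s))) s)
        (Set.uIcc (0:ℝ) (1/2)) := by
      intro s hs
      rw [Set.uIcc_of_le (by norm_num)] at hs
      show ‖(if s ≤ 1/2 then _ else _ : EuclideanSpace ℂ (Fin n))‖ = _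
      rw [if_pos hs.2]
      simp only [Function.comp_apply, smul_eq_mul, norm_smul, Real.norm_eq_abs]
      rw [abs_of_nonneg (mul_nonneg (by norm_num) (phid_nonneg _))]
    rw [intervalIntegral.integral_congr heq,
      intervalIntegral.integral_comp_smul_deriv (fun x _ => phi1_hasDeriv x)
        ((continuous_const.mul (continuous_phid.comp
          (continuous_const.mul continuous_id))).continuousOn) γ₁.hz'.norm]
    norm_num [HorizCurve.length]
  have e2 : ∫ s in (1/2:ℝ)..1, ‖(concat γ₁ γ₂ h h').z' s‖ = γ₂.length := by
    have heq : Set.EqOn (fun s => ‖(concat γ₁ γ₂ h h').z' s‖)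
        (fun s => (2 * phid (2*s-1)) • ((fun u => ‖γ₂.z' u‖) ∘ (fun s => phi (2*s-1))) s)
        (Set.uIcc (1/2:ℝ) 1) := by
      intro s hs
      rw [Set.uIcc_of_le (by norm_num)] at hs
      show ‖(if s ≤ 1/2 then _ else _ : EuclideanSpace ℂ (Fin n))‖ = _
      rcases eq_or_lt_of_le hs.1 with rfl | hlt
      · rw [if_pos le_rfl]
        norm_num
      · rw [if_neg (not_le.2 hlt)]
        simp only [Function.comp_apply, smul_eq_mul, norm_smul, Real.norm_eq_abs]
        rw [abs_of_nonneg (mul_nonneg (by norm_num) (phid_nonneg _))]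
    rw [intervalIntegral.integral_congr heq,
      intervalIntegral.integral_comp_smul_deriv (fun x _ => phi2_hasDeriv x)
        ((continuous_const.mul (continuous_phid.comp
          ((continuous_const.mul continuous_id).sub continuous_const))).continuousOn) γ₂.hz'.norm]
    norm_num [HorizCurve.length]
  rw [e1, e2]

/-- Time reversal of a horizontal curve. -/
def rev (γ : HorizCurve n) : HorizCurve n where
  z s := γ.z (1 - s)
  t s := γ.t (1 - s)
  z' s := -γ.z' (1 - s)
  hz s := by
    have h1 : HasDerivAt (fun s : ℝ => 1 - s) (-1) s := by
      simpa using (hasDerivAt_id s).const_sub (1:ℝ)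
    simpa [Function.comp_def] using (γ.hz (1 - s)).scomp s h1
  ht s := by
    have h1 : HasDerivAt (fun s : ℝ => 1 - s) (-1) s := by
      simpa using (hasDerivAt_id s).const_sub (1:ℝ)
    have := (γ.ht (1 - s)).scomp s h1
    convert this using 1 <;> try rfl
    rw [herm_neg_right, Complex.neg_im, smul_eq_mul]
    ring
  hz' := (γ.hz'.comp (continuous_const.sub continuous_id)).neg

@[simp] lemma rev_z0 (γ : HorizCurve n) : (rev γ).z 0 = γ.z 1 := by simp [rev]
@[simp] lemma rev_z1 (γ : HorizCurve n) : (rev γ).z 1 = γ.z 0 := by simp [rev]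
@[simp] lemma rev_t0 (γ : HorizCurve n) : (rev γ).t 0 = γ.t 1 := by simp [rev]
@[simp] lemma rev_t1 (γ : HorizCurve n) : (rev γ).t 1 = γ.t 0 := by simp [rev]

lemma rev_length (γ : HorizCurve n) : (rev γ).length = γ.length := by
  show ∫ s in (0:ℝ)..1, ‖-γ.z' (1 - s)‖ = _
  simp only [norm_neg]
  rw [intervalIntegral.integral_comp_sub_left (fun u => ‖γ.z' u‖) 1]
  norm_num [HorizCurve.length]

/-- Left translation of a horizontal curve. -/
def trans (a : Heis n) (γ : HorizCurve n) : HorizCurve n where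
  z s := a.1 + γ.z s
  t s := a.2 + γ.t s + hermCLM a.1 (γ.z s)
  z' s := γ.z' s
  hz s := (γ.hz s).const_add a.1
  ht s := by
    have := (((γ.ht s).const_add a.2).add
      ((hermCLM a.1).hasFDerivAt.comp_hasDerivAt s (γ.hz s)))
    convert this using 1 <;> try rfl
    rw [herm_add_left, hermCLM_apply, Complex.add_im]
    ring
  hz' := γ.hz'

@[simp] lemma trans_z (a : Heis n) (γ : HorizCurve n) (s : ℝ) :
    (trans a γ).z s = a.1 + γ.z s := rfl
@[simp] lemma trans_t (a : Heis n) (γ : HorizCurve n) (s : ℝ) :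
    (trans a γ).t s = a.2 + γ.t s + 2 * (herm a.1 (γ.z s)).im := by
  show _ + _ + hermCLM _ _ = _
  rw [hermCLM_apply]
lemma trans_length (a : Heis n) (γ : HorizCurve n) : (trans a γ).length = γ.length := rfl

/-- Dilation of a horizontal curve. -/
def dil (l : ℝ) (γ : HorizCurve n) : HorizCurve n where
  z s := l • γ.z s
  t s := l^2 * γ.t s
  z' s := l • γ.z' s
  hz s := (γ.hz s).const_smul l
  ht s := by
    have := (γ.ht s).const_mul (l^2)
    convert this using 1 <;> try rfl
    rw [im_herm_smul_left, im_herm_smul_right]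
    ring
  hz' := γ.hz'.const_smul l

@[simp] lemma dil_z (l : ℝ) (γ : HorizCurve n) (s : ℝ) : (dil l γ).z s = l • γ.z s := rfl
@[simp] lemma dil_t (l : ℝ) (γ : HorizCurve n) (s : ℝ) : (dil l γ).t s = l^2 * γ.t s := rfl
lemma dil_length (l : ℝ) (γ : HorizCurve n) : (dil l γ).length = |l| * γ.length := by
  show ∫ s in (0:ℝ)..1, ‖l • γ.z' s‖ = _
  simp only [norm_smul, Real.norm_eq_abs]
  rw [intervalIntegral.integral_const_mul]
  rfl

end Heis

namespace Heis
end Heis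

namespace Heis
open scoped Pointwise
variable {n : ℕ}

def dSet (p q : Heis n) : Set ℝ :=
  { L : ℝ | ∃ γ : HorizCurve n, γ.z 0 = p.1 ∧ γ.t 0 = p.2 ∧
      γ.z 1 = q.1 ∧ γ.t 1 = q.2 ∧ L = γ.length }

lemma ccDist_eq_sInf (p q : Heis n) : ccDist p q = sInf (dSet p q) := rfl

lemma dSet_nonneg {p q : Heis n} : ∀ L ∈ dSet p q, (0:ℝ) ≤ L := by
  rintro L ⟨γ, -, -, -, -, rfl⟩
  exact γ.length_nonneg

lemma bddBelow_dSet (p q : Heis n) : BddBelow (dSet p q) :=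
  ⟨0, fun L hL => dSet_nonneg L hL⟩

lemma ccDist_nonneg (p q : Heis n) : 0 ≤ ccDist p q :=
  Real.sInf_nonneg dSet_nonneg

/-- The constant curve. -/
def constCurve (p : Heis n) : HorizCurve n where
  z _ := p.1
  t _ := p.2
  z' _ := 0
  hz s := hasDerivAt_const s p.1
  ht s := by
    have := hasDerivAt_const (𝕜 := ℝ) s p.2
    convert this using 1 <;> try rfl
    rw [herm_zero_right]
    simp
  hz' := continuous_const

lemma ccDist_self (p : Heis n) : ccDist p p = 0 := by
  refine le_antisymm ?_ (ccDist_nonneg p p)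
  refine csInf_le (bddBelow_dSet p p) ⟨constCurve p, rfl, rfl, rfl, rfl, ?_⟩
  simp [HorizCurve.length, constCurve]

/-- Explicit upper bound for the CC distance. -/
def gBnd (p q : Heis n) : ℝ :=
  ‖q.1 - p.1‖ + Real.sqrt (π * |q.2 - p.2 - 2 * (herm p.1 (q.1 - p.1)).im|)

lemma gBnd_self (p : Heis n) : gBnd p p = 0 := by
  simp [gBnd, herm_zero_right]

lemma continuous_gBnd :
    Continuous (fun pq : Heis n × Heis n => gBnd pq.1 pq.2) := by
  apply Continuous.add
  · exact (continuous_fst.comp continuous_snd |>.sub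
      (continuous_fst.comp continuous_fst)).norm
  · apply Real.continuous_sqrt.comp
    apply continuous_const.mul
    apply Continuous.abs
    apply Continuous.sub
    · exact (continuous_snd.comp continuous_snd).sub (continuous_snd.comp continuous_fst)
    · apply continuous_const.mul
      apply Complex.continuous_im.comp
      exact continuous_herm.comp ((continuous_fst.comp continuous_fst).prodMk
        ((continuous_fst.comp continuous_snd).sub (continuous_fst.comp continuous_fst)))

lemma exists_curve (hn : 0 < n) (p q : Heis n) :
    ∃ γ : HorizCurve n, γ.z 0 = p.1 ∧ γ.t 0 = p.2 ∧ γ.z 1 = q.1 ∧ γ.t 1 = q.2 ∧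
      γ.length = gBnd p q := by
  set T := q.2 - (p.2 + 2 * (herm p.1 (q.1 - p.1)).im) with hT
  have hmz : (lineCurve p q).z 1 = (loopCurve hn q.1 ((lineCurve p q).t 1) T).z 0 := by
    simp
  have hmt : (lineCurve p q).t 1 = (loopCurve hn q.1 ((lineCurve p q).t 1) T).t 0 := by
    simp
  refine ⟨concat _ _ hmz hmt, ?_, ?_, ?_, ?_, ?_⟩
  · simp
  · simp
  · simp
  · simp [hT]
  · rw [concat_length, lineCurve_length, loopCurve_length, gBnd]
    congr 3
    rw [hT]; ring_nf

lemma dSet_nonempty (hn : 0 < n) (p q : Heis n) : (dSet p q).Nonempty := by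
  obtain ⟨γ, h1, h2, h3, h4, h5⟩ := exists_curve hn p q
  exact ⟨γ.length, γ, h1, h2, h3, h4, rfl⟩

lemma ccDist_le_gBnd (hn : 0 < n) (p q : Heis n) : ccDist p q ≤ gBnd p q := by
  obtain ⟨γ, h1, h2, h3, h4, h5⟩ := exists_curve hn p q
  exact h5 ▸ csInf_le (bddBelow_dSet p q) ⟨γ, h1, h2, h3, h4, rfl⟩

lemma norm_sub_le_ccDist (hn : 0 < n) (p q : Heis n) : ‖q.1 - p.1‖ ≤ ccDist p q := by
  refine le_csInf (dSet_nonempty hn p q) ?_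
  rintro L ⟨γ, h1, h2, h3, h4, rfl⟩
  rw [← h1, ← h3]
  exact γ.norm_z_one_sub_le

lemma ccDist_triangle (hn : 0 < n) (p m q : Heis n) :
    ccDist p q ≤ ccDist p m + ccDist m q := by
  refine le_of_forall_pos_le_add fun ε hε => ?_
  obtain ⟨L₁, ⟨γ₁, ha1, ha2, ha3, ha4, rfl⟩, hL₁⟩ :=
    Real.lt_sInf_add_pos (dSet_nonempty hn p m) (half_pos hε)
  obtain ⟨L₂, ⟨γ₂, hb1, hb2, hb3, hb4, rfl⟩, hL₂⟩ :=
    Real.lt_sInf_add_pos (dSet_nonempty hn m q) (half_pos hε)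
  have hmz : γ₁.z 1 = γ₂.z 0 := by rw [ha3, hb1]
  have hmt : γ₁.t 1 = γ₂.t 0 := by rw [ha4, hb2]
  have hmem : γ₁.length + γ₂.length ∈ dSet p q := by
    refine ⟨concat γ₁ γ₂ hmz hmt, ?_, ?_, ?_, ?_, (concat_length _ _ _ _).symm⟩ <;>
      simp [ha1, ha2, hb3, hb4]
  have := csInf_le (bddBelow_dSet p q) hmem
  simp only [ccDist_eq_sInf] at *
  linarith

lemma dSet_symm_subset (p q : Heis n) : dSet p q ⊆ dSet q p := by
  rintro L ⟨γ, h1, h2, h3, h4, rfl⟩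
  exact ⟨rev γ, by simp [h3], by simp [h4], by simp [h1], by simp [h2],
    (rev_length γ).symm⟩

lemma ccDist_symm (p q : Heis n) : ccDist p q = ccDist q p := by
  rw [ccDist_eq_sInf, ccDist_eq_sInf]
  congr 1
  exact le_antisymm (dSet_symm_subset p q) (dSet_symm_subset q p)

lemma herm_add_right (z w w' : EuclideanSpace ℂ (Fin n)) :
    herm z (w + w') = herm z w + herm z w' := by
  simp [herm_eq_inner, inner_add_left]

lemma mul_left_inv_mul (a x : Heis n) :
    mul ((-a.1, -a.2) : Heis n) (mul a x) = x := by
  unfold mul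
  refine Prod.ext (by simp) ?_
  show -a.2 + (a.2 + x.2 + 2 * (herm a.1 x.1).im) + 2 * (herm (-a.1) (a.1 + x.1)).im = x.2
  have : herm (-a.1) (a.1 + x.1) = -(herm a.1 a.1) - herm a.1 x.1 := by
    rw [herm_add_right]
    have hneg : ∀ w, herm (-a.1) w = - herm a.1 w := by
      intro w; simp [herm_eq_inner, inner_neg_right]
    rw [hneg, hneg]; ring
  rw [this]
  simp only [Complex.sub_im, Complex.neg_im, im_herm_self]
  ring

lemma dSet_mul_subset (a p q : Heis n) : dSet p q ⊆ dSet (mul a p) (mul a q) := by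
  rintro L ⟨γ, h1, h2, h3, h4, rfl⟩
  refine ⟨trans a γ, ?_, ?_, ?_, ?_, (trans_length a γ).symm⟩ <;>
    simp [h1, h2, h3, h4, mul]

lemma ccDist_mul_left (a p q : Heis n) :
    ccDist (mul a p) (mul a q) = ccDist p q := by
  rw [ccDist_eq_sInf, ccDist_eq_sInf]
  congr 1
  refine le_antisymm ?_ (dSet_mul_subset a p q)
  intro L hL
  have := dSet_mul_subset ((-a.1, -a.2) : Heis n) _ _ hL
  rwa [mul_left_inv_mul, mul_left_inv_mul] at this

lemma dilation_inv (l : ℝ) (hl : l ≠ 0) (x : Heis n) :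
    dilation l⁻¹ (dilation l x) = x := by
  unfold dilation
  refine Prod.ext ?_ ?_
  · show l⁻¹ • l • x.1 = x.1
    rw [smul_smul, inv_mul_cancel₀ hl, one_smul]
  · show (l⁻¹)^2 * (l^2 * x.2) = x.2
    field_simp

lemma ccDist_dilation (l : ℝ) (hl : 0 < l) (p q : Heis n) :
    ccDist (dilation l p) (dilation l q) = l * ccDist p q := by
  have hsub : ∀ (m : ℝ), 0 < m → ∀ x y : Heis n,
      ∀ L ∈ dSet x y, m * L ∈ dSet (dilation m x) (dilation m y) := by
    rintro m hm x y L ⟨γ, h1, h2, h3, h4, rfl⟩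
    refine ⟨dil m γ, ?_, ?_, ?_, ?_, ?_⟩ <;>
      simp [h1, h2, h3, h4, dilation, dil_length, abs_of_pos hm]
  have hset : dSet (dilation l p) (dilation l q) = l • dSet p q := by
    ext L
    constructor
    · intro hL
      have h2 := hsub l⁻¹ (by positivity) _ _ L hL
      rw [dilation_inv l hl.ne' p, dilation_inv l hl.ne' q] at h2
      exact ⟨l⁻¹ * L, h2, by simp only [smul_eq_mul]; field_simp⟩
    · rintro ⟨L', hL', rfl⟩
      exact hsub l hl p q L' hL'
  rw [ccDist_eq_sInf, ccDist_eq_sInf, hset, Real.sInf_smul_of_nonneg hl.le, smul_eq_mul]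

end Heis
namespace Heis
variable {n : ℕ}

set_option maxHeartbeats 1000000 in
lemma continuous_ccDist (hn : 0 < n) (p : Heis n) :
    Continuous fun q => ccDist p q := by
  rw [continuous_iff_continuousAt]
  intro q₀
  have hb : ∀ q : Heis n, ‖ccDist p q - ccDist p q₀‖ ≤ gBnd q₀ q := by
    intro q
    rw [Real.norm_eq_abs, abs_sub_le_iff]
    constructor
    · have h1 := ccDist_triangle hn p q₀ q
      have h2 := ccDist_le_gBnd hn q₀ q
      linarith
    · have h1 := ccDist_triangle hn p q q₀
      have h3 : ccDist q q₀ = ccDist q₀ q := ccDist_symm q q₀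
      have h2 := ccDist_le_gBnd hn q₀ q
      linarith
  have hc : Continuous fun q : Heis n => gBnd q₀ q := by
    unfold gBnd
    apply Continuous.add
    · exact (continuous_fst.sub continuous_const).norm
    · apply Real.continuous_sqrt.comp
      apply continuous_const.mul
      apply Continuous.abs
      apply Continuous.sub
      · exact continuous_snd.sub continuous_const
      · apply continuous_const.mul
        apply Complex.continuous_im.comp
        exact continuous_herm.comp (continuous_const.prodMk
          (continuous_fst.sub continuous_const))
  have h0 : Filter.Tendsto (fun q : Heis n => gBnd q₀ q) (nhds q₀) (nhds 0) := by
    have := hc.tendsto q₀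
    rwa [gBnd_self] at this
  have hdiff := squeeze_zero_norm hb h0
  have h5 := hdiff.add_const (ccDist p q₀)
  simp only [zero_add, sub_add_cancel] at h5
  exact h5

lemma isOpen_ccBall (hn : 0 < n) (p : Heis n) (r : ℝ) : IsOpen (ccBall p r) :=
  isOpen_lt (continuous_ccDist hn p) continuous_const

lemma mem_ccBall_self (p : Heis n) {r : ℝ} (hr : 0 < r) : p ∈ ccBall p r := by
  show ccDist p p < r
  rw [ccDist_self]; exact hr

def diamSet (F : Set (Heis n)) : Set ℝ := { r : ℝ | ∃ p ∈ F, ∃ q ∈ F, r = ccDist p q }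

lemma ccDiam_eq_sSup (F : Set (Heis n)) : ccDiam F = sSup (diamSet F) := rfl

lemma bddAbove_diamSet {F : Set (Heis n)} (h : ccBounded F) : BddAbove (diamSet F) := by
  obtain ⟨M, hM⟩ := h
  exact ⟨M, by rintro r ⟨p, hp, q, hq, rfl⟩; exact hM p hp q hq⟩

lemma ccDist_le_ccDiam {F : Set (Heis n)} (h : ccBounded F) {p q : Heis n}
    (hp : p ∈ F) (hq : q ∈ F) : ccDist p q ≤ ccDiam F :=
  le_csSup (bddAbove_diamSet h) ⟨p, hp, q, hq, rfl⟩

lemma ccDiam_le {F : Set (Heis n)} {D : ℝ} (hD : 0 ≤ D)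
    (h : ∀ p ∈ F, ∀ q ∈ F, ccDist p q ≤ D) : ccDiam F ≤ D :=
  Real.sSup_le (by rintro r ⟨p, hp, q, hq, rfl⟩; exact h p hp q hq) hD

lemma ccDiam_mono {E F : Set (Heis n)} (hEF : E ⊆ F) (hne : E.Nonempty)
    (hF : ccBounded F) : ccDiam E ≤ ccDiam F := by
  obtain ⟨p, hp⟩ := hne
  refine csSup_le_csSup (bddAbove_diamSet hF) ⟨ccDist p p, p, hp, p, hp, rfl⟩ ?_
  rintro r ⟨a, ha, b, hb, rfl⟩
  exact ⟨a, hEF ha, b, hEF hb, rfl⟩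

lemma ccDiam_nonneg (F : Set (Heis n)) : 0 ≤ ccDiam F := by
  rcases Set.eq_empty_or_nonempty F with rfl | ⟨p, hp⟩
  · rw [ccDiam_eq_sSup]
    have hemp : diamSet (∅ : Set (Heis n)) = ∅ := by
      ext r; simp [diamSet]
    rw [hemp, Real.sSup_empty]
  · rcases Classical.em (BddAbove (diamSet F)) with hb | hb
    · have := le_csSup hb ⟨p, hp, p, hp, rfl⟩
      rw [ccDist_self] at this
      exact this
    · rw [ccDiam_eq_sSup, Real.sSup_of_not_bddAbove hb]

lemma ccBounded_of_isCompact (hn : 0 < n) {E : Set (Heis n)} (hE : IsCompact E) :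
    ccBounded E := by
  obtain ⟨C, hC⟩ := (hE.prod hE).exists_bound_of_continuousOn
    (continuous_gBnd (n := n)).continuousOn
  refine ⟨C, fun p hp q hq => ?_⟩
  have := hC (p, q) (Set.mk_mem_prod hp hq)
  have h2 := ccDist_le_gBnd hn p q
  have h3 : gBnd p q ≤ C := le_trans (le_abs_self _) this
  linarith

instance (n : ℕ) : (volume : Measure (EuclideanSpace ℂ (Fin n))).IsAddHaarMeasure := by
  have : (volume : Measure (EuclideanSpace ℂ (Fin n)))
      = Measure.map (⇑(PiLp.continuousLinearEquiv 2 ℝ (fun _ : Fin n => ℂ)).symm) volume := rfl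
  rw [this]
  exact (PiLp.continuousLinearEquiv 2 ℝ (fun _ : Fin n => ℂ)).symm.isAddHaarMeasure_map volume

lemma finrank_heis_z (n : ℕ) : Module.finrank ℝ (EuclideanSpace ℂ (Fin n)) = 2 * n := by
  have h1 : Module.finrank ℝ ℂ * Module.finrank ℂ (EuclideanSpace ℂ (Fin n))
      = Module.finrank ℝ (EuclideanSpace ℂ (Fin n)) := Module.finrank_mul_finrank ℝ ℂ _
  rw [finrank_euclideanSpace, Complex.finrank_real_complex, Fintype.card_fin] at h1
  omega

lemma volume_open_pos {U : Set (Heis n)} (hU : IsOpen U) (hne : U.Nonempty) :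
    0 < volume U := by
  rw [Measure.volume_eq_prod]
  exact hU.measure_pos _ hne

lemma volume_le_of_ccDist_le (hn : 0 < n) (F : Set (Heis n)) (p : Heis n) (D : ℝ)
    (hD : 0 < D) (hF : ∀ q ∈ F, ccDist p q ≤ D) :
    volume F ≤ ENNReal.ofReal (16 * D ^ (2*n+2)) *
      volume (Metric.ball (0 : EuclideanSpace ℂ (Fin n)) 1) := by
  classical
  set c : EuclideanSpace ℂ (Fin n) → ℝ := fun w => p.2 + 2 * (herm p.1 (w - p.1)).im with hc
  have hccont : Continuous c := by
    apply continuous_const.add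
    apply continuous_const.mul
    exact Complex.continuous_im.comp (continuous_herm.comp
      (continuous_const.prodMk (continuous_id.sub continuous_const)))
  set A : Set (Heis n) := {x | x.1 ∈ Metric.closedBall p.1 D ∧ |x.2 - c x.1| ≤ 8 * D^2}
    with hA
  have hFA : F ⊆ A := by
    intro q hq
    have h1 : ‖q.1 - p.1‖ ≤ D := le_trans (norm_sub_le_ccDist hn p q) (hF q hq)
    obtain ⟨L, ⟨γ, e1, e2, e3, e4, rfl⟩, hlt⟩ :=
      Real.lt_sInf_add_pos (dSet_nonempty hn p q) hD
    have hlen : γ.length ≤ 2 * D := by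
      have := hF q hq
      rw [ccDist_eq_sInf] at this
      linarith
    have hest := γ.t_est
    rw [e1, e2, e3, e4] at hest
    have hlen0 := γ.length_nonneg
    constructor
    · rwa [Metric.mem_closedBall, dist_eq_norm]
    · show |q.2 - c q.1| ≤ 8 * D^2
      rw [hc]
      have : q.2 - (p.2 + 2 * (herm p.1 (q.1 - p.1)).im)
          = q.2 - p.2 - 2 * (herm p.1 (q.1 - p.1)).im := by ring
      rw [this]
      nlinarith
  have hclosedA : IsClosed A := by
    apply IsClosed.inter
    · exact (Metric.isClosed_closedBall).preimage continuous_fst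
    · have : Continuous fun x : Heis n => |x.2 - c x.1| :=
        ((continuous_snd.sub (hccont.comp continuous_fst))).abs
      exact isClosed_le this continuous_const
  have hmeasA : MeasurableSet A := hclosedA.measurableSet
  calc volume F ≤ volume A := measure_mono hFA
    _ = ∫⁻ z, volume (Prod.mk z ⁻¹' A) ∂(volume : Measure (EuclideanSpace ℂ (Fin n))) := by
        rw [Measure.volume_eq_prod, Measure.prod_apply hmeasA]
    _ = ∫⁻ z, (Metric.closedBall p.1 D).indicator
          (fun _ => ENNReal.ofReal (16 * D^2)) z ∂volume := by
        apply lintegral_congr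
        intro z
        by_cases hz : z ∈ Metric.closedBall p.1 D
        · have : Prod.mk z ⁻¹' A = Set.Icc (c z - 8*D^2) (c z + 8*D^2) := by
            ext t
            simp only [Set.mem_preimage, hA, Set.mem_setOf_eq, Set.mem_Icc]
            constructor
            · rintro ⟨-, h⟩
              rw [abs_le] at h
              constructor <;> linarith [h.1, h.2]
            · intro h
              exact ⟨hz, by rw [abs_le]; constructor <;> linarith [h.1, h.2]⟩
          rw [this, Real.volume_Icc, Set.indicator_of_mem hz]
          congr 1
          ring
        · have : Prod.mk z ⁻¹' A = ∅ := by
            ext t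
            simp only [Set.mem_preimage, hA, Set.mem_setOf_eq, Set.mem_empty_iff_false,
              iff_false, not_and]
            intro h
            exact absurd h hz
          rw [this, Set.indicator_of_notMem hz]
          simp
    _ = ENNReal.ofReal (16 * D^2) * volume (Metric.closedBall p.1 D) := by
        rw [lintegral_indicator Metric.isClosed_closedBall.measurableSet]
        simp [Measure.restrict_apply]
    _ = ENNReal.ofReal (16 * D^2) * (ENNReal.ofReal (D ^ (2*n))
          * volume (Metric.ball (0 : EuclideanSpace ℂ (Fin n)) 1)) := by
        rw [Measure.addHaar_closedBall volume p.1 hD.le, finrank_heis_z]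
    _ = ENNReal.ofReal (16 * D ^ (2*n+2)) *
          volume (Metric.ball (0 : EuclideanSpace ℂ (Fin n)) 1) := by
        rw [← mul_assoc, ← ENNReal.ofReal_mul (by positivity)]
        congr 2
        rw [pow_add]
        ring

lemma volume_lt_top_of_ccBounded (hn : 0 < n) {F : Set (Heis n)} (h : ccBounded F) :
    volume F < ⊤ := by
  rcases Set.eq_empty_or_nonempty F with rfl | ⟨p, hp⟩
  · simp
  obtain ⟨M, hM⟩ := h
  have hM' : ∀ q ∈ F, ccDist p q ≤ |M| + 1 := fun q hq =>
    le_trans (hM p hp q hq) (by linarith [le_abs_self M])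
  refine lt_of_le_of_lt (volume_le_of_ccDist_le hn F p (|M|+1) (by positivity) hM') ?_
  apply ENNReal.mul_lt_top ENNReal.ofReal_lt_top
  exact lt_of_le_of_lt (measure_mono Metric.ball_subset_closedBall)
    (isCompact_closedBall (0 : EuclideanSpace ℂ (Fin n)) 1).measure_lt_top

lemma bddAbove_CI_aux (hn : 0 < n) :
    BddAbove { x : ℝ | ∃ F : Set (Heis n), ccBounded F ∧ 0 < ccDiam F ∧
      x = (volume F).toReal / (ccDiam F) ^ (2 * n + 2) } := by
  set K := volume (Metric.ball (0 : EuclideanSpace ℂ (Fin n)) 1) with hK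
  have hKfin : K ≠ ⊤ := by
    refine ne_of_lt (lt_of_le_of_lt (measure_mono Metric.ball_subset_closedBall) ?_)
    exact (isCompact_closedBall (0 : EuclideanSpace ℂ (Fin n)) 1).measure_lt_top
  refine ⟨16 * K.toReal, ?_⟩
  rintro x ⟨F, hFb, hFd, rfl⟩
  have hFne : F.Nonempty := by
    by_contra hne
    rw [Set.not_nonempty_iff_eq_empty] at hne
    subst hne
    have : ccDiam (∅ : Set (Heis n)) = 0 := by
      rw [ccDiam_eq_sSup]
      convert Real.sSup_empty
      rw [Set.eq_empty_iff_forall_notMem]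
      rintro r ⟨p, hp, -⟩
      exact hp
    rw [this] at hFd
    exact lt_irrefl _ hFd
  obtain ⟨p, hp⟩ := hFne
  set D := ccDiam F with hD
  have hq : ∀ q ∈ F, ccDist p q ≤ D := fun q hq => ccDist_le_ccDiam hFb hp hq
  have hvol := volume_le_of_ccDist_le hn F p D hFd hq
  have hDpow : (0:ℝ) < D ^ (2*n+2) := by positivity
  rw [div_le_iff₀ hDpow]
  have htoReal : (volume F).toReal ≤ 16 * D ^ (2*n+2) * K.toReal := by
    have h2 : (ENNReal.ofReal (16 * D ^ (2*n+2)) * K).toReal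
        = 16 * D ^ (2*n+2) * K.toReal := by
      rw [ENNReal.toReal_mul, ENNReal.toReal_ofReal (by positivity)]
    rw [← h2]
    apply ENNReal.toReal_mono
    · exact ENNReal.mul_ne_top ENNReal.ofReal_ne_top hKfin
    · exact hvol
  calc (volume F).toReal ≤ 16 * D ^ (2*n+2) * K.toReal := htoReal
    _ = 16 * K.toReal * D ^ (2*n+2) := by ring

end Heis

/-- Every compact isodiametric set `E` satisfies the necessary condition (NC): for every
`p ∈ ∂E` there exists `q ∈ ∂E` with `d(p,q) = diam E`. -/
theorem stmt13 (n : ℕ) (E : Set (Heis n)) (hE : IsCompact E)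
    (hd : 0 < Heis.ccDiam E)
    (hiso : (volume E).toReal = Heis.CI n * Heis.ccDiam E ^ (2 * n + 2)) :
    ∀ p ∈ frontier E, ∃ q ∈ frontier E, Heis.ccDist p q = Heis.ccDiam E := by
  open Heis in
  intro p hp
  have hEclosed : IsClosed E := hE.isClosed
  have hpE : p ∈ E := hEclosed.frontier_subset hp
  rcases Nat.eq_zero_or_pos n with rfl | hn
  · -- degenerate case `n = 0`: all CC distances vanish
    exfalso
    have hccd : ∀ x y : Heis 0, ccDist x y ≤ 0 := by
      intro x y
      rcases Set.eq_empty_or_nonempty (dSet x y) with h | ⟨L, ⟨γ, e1, e2, e3, e4, rfl⟩⟩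
      · rw [ccDist_eq_sInf, h, Real.sInf_empty]
      · have hz1 : x.1 = y.1 := by
          rw [← e1, ← e3]
          exact PiLp.ext fun j => Fin.elim0 j
        have hderiv : ∀ s, HasDerivAt γ.t 0 s := by
          intro s
          have h := γ.ht s
          have hh : herm (γ.z s) (γ.z' s) = 0 := by
            simp [herm]
          rw [hh] at h
          simpa using h
        have ht0 : γ.t 1 - γ.t 0 = 0 := by
          have := intervalIntegral.integral_eq_sub_of_hasDerivAt
            (f := γ.t) (f' := fun _ => (0:ℝ)) (a := 0) (b := 1)
            (fun s _ => hderiv s) (intervalIntegrable_const)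
          simp at this
          linarith
        have hxy : x = y := by
          refine Prod.ext hz1 ?_
          rw [← e2, ← e4]
          linarith
        rw [hxy, ccDist_self]
    have : ccDiam E ≤ 0 := ccDiam_le le_rfl fun a _ b _ => hccd a b
    linarith
  -- main case `0 < n`
  by_contra hcon
  push_neg at hcon
  set D := ccDiam E with hD
  have hEb : ccBounded E := ccBounded_of_isCompact hn hE
  have hEne : E.Nonempty := ⟨p, hpE⟩
  have hlt : ∀ q ∈ frontier E, ccDist p q < D := fun q hq =>
    lt_of_le_of_ne (ccDist_le_ccDiam hEb hpE (hEclosed.frontier_subset hq)) (hcon q hq)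
  have hfront_comp : IsCompact (frontier E) :=
    IsCompact.of_isClosed_subset hE isClosed_frontier hEclosed.frontier_subset
  have hfront_ne : (frontier E).Nonempty := ⟨p, hp⟩
  obtain ⟨qs, hqsmem, hqsmax⟩ := hfront_comp.exists_isMaxOn hfront_ne
    (continuous_ccDist hn p).continuousOn
  set M := ccDist p qs with hM
  have hM_lt : M < D := hlt _ hqsmem
  have hM0 : (0:ℝ) ≤ M := ccDist_nonneg _ _
  -- every point of `E` is at distance at most `M` from `p`
  have key : ∀ y ∈ E, ccDist p y ≤ M := by
    intro y hy
    obtain ⟨y₀, hy₀mem, hy₀max⟩ := hE.exists_isMaxOn hEne (continuous_ccDist hn p).continuousOn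
    have hyy₀ : ccDist p y ≤ ccDist p y₀ := hy₀max hy
    rcases Classical.em (y₀ ∈ frontier E) with hf | hf
    · exact le_trans hyy₀ (hqsmax hf)
    · have hint : y₀ ∈ interior E := by
        by_contra hni
        exact hf ⟨subset_closure hy₀mem, hni⟩
      rcases eq_or_lt_of_le (ccDist_nonneg p y₀) with hzero | hpos
      · refine le_trans hyy₀ ?_
        rw [← hzero]
        exact hM0
      · exfalso
        set w : Heis n := mul ((-p.1, -p.2) : Heis n) y₀ with hw
        have hp0 : mul p ((0,0) : Heis n) = p := by
          unfold mul
          refine Prod.ext (by simp) ?_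
          show p.2 + 0 + 2 * (herm p.1 0).im = p.2
          rw [herm_zero_right]
          simp
        have hd0 : ∀ l : ℝ, dilation l ((0,0) : Heis n) = ((0,0) : Heis n) := by
          intro l
          unfold dilation
          refine Prod.ext (by simp) (by simp)
        have hpw : mul p w = y₀ := by
          have h1 := mul_left_inv_mul (a := ((-p.1, -p.2) : Heis n)) (x := y₀)
          simp only [neg_neg] at h1
          rw [hw]
          convert h1 using 2
        have hdist : ∀ l : ℝ, 0 < l → ccDist p (mul p (dilation l w)) = l * ccDist p y₀ := by
          intro l hl
          have e1 : ccDist p (mul p (dilation l w)) = ccDist ((0,0) : Heis n) (dilation l w) := by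
            have h := ccDist_mul_left p ((0,0) : Heis n) (dilation l w)
            rwa [hp0] at h
          have e2 : ccDist ((0,0) : Heis n) w = ccDist p y₀ := by
            have h := ccDist_mul_left p ((0,0) : Heis n) w
            rw [hp0, hpw] at h
            exact h.symm
          rw [e1, ← hd0 l, ccDist_dilation l hl, e2]
        have hfun : (fun l : ℝ => mul p (dilation l w))
            = fun l : ℝ => ((p.1 + l • w.1, p.2 + l^2 * w.2 + 2 * (l * (herm p.1 w.1).im)) : Heis n) := by
          funext l
          unfold mul dilation
          refine Prod.ext rfl ?_
          show p.2 + l^2 * w.2 + 2 * (herm p.1 (l • w.1)).im = _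
          rw [im_herm_smul_right]
        have hcontY : Continuous fun l : ℝ => mul p (dilation l w) := by
          rw [hfun]
          refine Continuous.prodMk ?_ ?_
          · exact continuous_const.add (continuous_id.smul continuous_const)
          · exact (continuous_const.add ((continuous_pow 2).mul continuous_const)).add
              (continuous_const.mul (continuous_id.mul continuous_const))
        obtain ⟨ε, hε, hball⟩ := Metric.isOpen_iff.1 isOpen_interior y₀ hint
        have htend : Filter.Tendsto (fun l : ℝ => mul p (dilation l w)) (nhds 1)
            (nhds y₀) := by
          have := hcontY.tendsto 1
          rwa [show mul p (dilation 1 w) = y₀ by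
            rw [show dilation 1 w = w by unfold dilation; simp, hpw]] at this
        have hev : ∀ᶠ l in nhds (1:ℝ), mul p (dilation l w) ∈ Metric.ball y₀ ε :=
          htend (Metric.ball_mem_nhds _ hε)
        have hev2 := (hev.filter_mono (nhdsWithin_le_nhds (s := Set.Ioi (1:ℝ)))).and
          eventually_mem_nhdsWithin
        obtain ⟨l, hlP, hl1⟩ := hev2.exists
        have hlE : mul p (dilation l w) ∈ E := interior_subset (hball hlP)
        have hl1' : (1:ℝ) < l := hl1
        have hle : ccDist p (mul p (dilation l w)) ≤ ccDist p y₀ := hy₀max hlE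
        have heq := hdist l (lt_trans zero_lt_one hl1')
        rw [heq] at hle
        nlinarith [hle, hpos, hl1']
  -- construct the competitor set
  set r := min ((D - M)/2) (D/2) with hr'
  have hr : 0 < r := lt_min (by linarith) (by linarith)
  set B := ccClosedBall p r with hB
  set F := E ∪ B with hF
  have hpairs : ∀ x ∈ F, ∀ y ∈ F, ccDist x y ≤ D := by
    intro x hx y hy
    have hrdm : r ≤ (D - M)/2 := min_le_left _ _
    have hrd2 : r ≤ D/2 := min_le_right _ _
    rcases hx with hx | hx <;> rcases hy with hy | hy
    · exact ccDist_le_ccDiam hEb hx hy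
    · have h1 := ccDist_triangle hn x p y
      have h2 : ccDist x p ≤ M := by rw [ccDist_symm]; exact key x hx
      have h3 : ccDist p y ≤ r := hy
      linarith
    · have h1 := ccDist_triangle hn y p x
      have h2 : ccDist y p ≤ M := by rw [ccDist_symm]; exact key y hy
      have h3 : ccDist p x ≤ r := hx
      rw [ccDist_symm]
      linarith
    · have h1 := ccDist_triangle hn x p y
      have h2 : ccDist x p ≤ r := by rw [ccDist_symm]; exact hx
      have h3 : ccDist p y ≤ r := hy
      linarith
  have hFb : ccBounded F := ⟨D, hpairs⟩
  have hDiamF : ccDiam F = D :=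
    le_antisymm (ccDiam_le hd.le hpairs) (ccDiam_mono Set.subset_union_left hEne hFb)
  -- volume strictly increases
  have hpc : p ∈ closure (Eᶜ) := by
    rw [closure_compl]
    exact Set.mem_compl hp.2
  have hU : ((ccBall p r ∩ Eᶜ)).Nonempty := by
    have := _root_.mem_closure_iff.1 hpc (ccBall p r) (isOpen_ccBall hn p r)
      (mem_ccBall_self p hr)
    exact this
  have hUopen : IsOpen (ccBall p r ∩ Eᶜ) := (isOpen_ccBall hn p r).inter hEclosed.isOpen_compl
  have hUvol : 0 < volume (ccBall p r ∩ Eᶜ) := volume_open_pos hUopen hU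
  have hdisj : Disjoint E (ccBall p r ∩ Eᶜ) :=
    Set.disjoint_left.2 fun a ha hmem => hmem.2 ha
  have hsub : E ∪ (ccBall p r ∩ Eᶜ) ⊆ F := by
    refine Set.union_subset Set.subset_union_left ?_
    intro x hx
    refine Set.mem_union_right E ?_
    have hxlt : ccDist p x < r := hx.1
    rw [hB]
    show ccDist p x ≤ r
    exact le_of_lt hxlt
  have hvolF_lt_top : volume F < ⊤ := volume_lt_top_of_ccBounded hn hFb
  have hvolE_ne_top : volume E ≠ ⊤ :=
    ne_of_lt (lt_of_le_of_lt (measure_mono Set.subset_union_left) hvolF_lt_top)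
  have hvol_lt : volume E < volume F := by
    calc volume E < volume E + volume (ccBall p r ∩ Eᶜ) :=
          ENNReal.lt_add_right hvolE_ne_top (ne_of_gt hUvol)
      _ = volume (E ∪ (ccBall p r ∩ Eᶜ)) :=
          (measure_union hdisj hUopen.measurableSet).symm
      _ ≤ volume F := measure_mono hsub
  have htoReal_lt : (volume E).toReal < (volume F).toReal :=
    ENNReal.toReal_strict_mono (ne_of_lt hvolF_lt_top) hvol_lt
  -- contradiction with the isodiametric property
  have hDpow : (0:ℝ) < D ^ (2*n+2) := by positivity
  have hxmem : (volume F).toReal / D ^ (2*n+2) ∈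
      { x : ℝ | ∃ G : Set (Heis n), ccBounded G ∧ 0 < ccDiam G ∧
        x = (volume G).toReal / (ccDiam G) ^ (2 * n + 2) } := by
    exact ⟨F, hFb, by rw [hDiamF]; exact hd, by rw [hDiamF]⟩
  have hle : (volume F).toReal / D ^ (2*n+2) ≤ CI n :=
    le_csSup (bddAbove_CI_aux hn) hxmem
  have hCI : CI n = (volume E).toReal / D ^ (2*n+2) := by
    rw [hiso, mul_div_assoc, div_self (ne_of_gt hDpow), mul_one]
  rw [hCI] at hle
  have := (div_le_div_iff_of_pos_right hDpow).1 hle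
  linarith
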